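/- Let A be an associative algebra over Q and (id, d_1, d_2, ...) a Hasse-Schmidt derivation on A. Define δ_n recursively by δ_n = n d_n - δ_1 d_{n-1} - ... - δ_{n-1} d_1. Then each δ_n is an ordinary derivation on A. -/

import Mathlib

open Finset

/-- Triangle reindexing: sum over `{(i, j-i) : i ≤ j < n}` equals sum over
`{(i, m) : i + m < n}`. -/
private lemma tri2 {M : Type*} [AddCommMonoid M] (f : ℕ → ℕ → M) :
    ∀ n : ℕ, ∑ j ∈ range n, ∑ i ∈ range (j + 1), f i (j - i)
      = ∑ i ∈ range n, ∑ m ∈ range (n - i), f i m := by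
  intro n
  induction n with
  | zero => simp
  | succ n ih =>
    rw [sum_range_succ, ih, sum_range_succ (fun i => ∑ m ∈ range (n + 1 - i), f i m) n]
    have h1 : ∑ i ∈ range n, ∑ m ∈ range (n + 1 - i), f i m
        = ∑ i ∈ range n, ((∑ m ∈ range (n - i), f i m) + f i (n - i)) := by
      refine sum_congr rfl fun i hi => ?_
      have hi' : i < n := mem_range.mp hi
      have h : n + 1 - i = (n - i) + 1 := by omega
      rw [h, sum_range_succ]
    have h2 : ∑ i ∈ range (n + 1), f i (n - i)
        = (∑ i ∈ range n, f i (n - i)) + f n 0 := by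
      rw [sum_range_succ]; simp
    have h3 : ∑ m ∈ range (n + 1 - n), f n m = f n 0 := by
      have h : n + 1 - n = 1 := by omega
      rw [h]; simp
    rw [h1, sum_add_distrib, h2, h3]
    abel

/-- Swapping the order of summation over a triangle. -/
private lemma tri_swap {M : Type*} [AddCommMonoid M] (F : ℕ → ℕ → M) (n : ℕ) :
    ∑ j ∈ range n, ∑ i ∈ range (n - j), F j i
      = ∑ i ∈ range n, ∑ j ∈ range (n - i), F j i := by
  rw [← tri2 (fun i m => F i m) n, ← tri2 (fun i m => F m i) n]
  refine sum_congr rfl fun j hj => ?_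
  have h := Finset.sum_range_reflect (fun i => F (j - i) i) (j + 1)
  simp only [Nat.add_sub_cancel] at h
  rw [← h]
  refine sum_congr rfl fun i hi => ?_
  have hi' : i < j + 1 := mem_range.mp hi
  have h1 : j - (j - i) = i := by omega
  rw [h1]

/-- Theorem 4.4 (first part): if `(id, d 1, d 2, ...)` is a Hasse-Schmidt derivation on an
associative `ℚ`-algebra `A`, then the `δ n` defined recursively by
`δ n = n • d n - δ 1 * d (n-1) - ... - δ (n-1) * d 1` are ordinary derivations. -/
theorem stmt_9 {A : Type*} [Ring A] [Algebra ℚ A]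
    (d : ℕ → AddMonoid.End A) (hd0 : d 0 = 1)
    (hHS : ∀ n, 1 ≤ n → ∀ a b : A,
      d n (a * b) = ∑ i ∈ Finset.range (n + 1), d i a * d (n - i) b)
    (δ : ℕ → AddMonoid.End A)
    (hδ : ∀ n, 1 ≤ n →
      δ n = n • d n - ∑ i ∈ Finset.range (n - 1), δ (i + 1) * d (n - 1 - i)) :
    ∀ n, 1 ≤ n → ∀ a b : A, δ n (a * b) = a * δ n b + δ n a * b := by
  -- pointwise version of the recursion, valid for all `k ≥ 0`:
  -- `k • d k x = ∑_{i < k} δ (i+1) (d (k-1-i) x)`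
  have key : ∀ k : ℕ, ∀ x : A,
      k • d k x = ∑ i ∈ range k, δ (i + 1) (d (k - 1 - i) x) := by
    intro k x
    match k with
    | 0 => simp
    | (k + 1) =>
      have h := hδ (k + 1) (by omega)
      simp only [Nat.add_sub_cancel] at h
      have hx : δ (k + 1) x
          = (k + 1) • d (k + 1) x - ∑ i ∈ range k, δ (i + 1) (d (k - i) x) := by
        erw [h, AddMonoidHom.sub_apply, AddMonoidHom.nsmul_apply,
          AddMonoidHom.finset_sum_apply]
        rfl
      rw [sum_range_succ]
      have hlast : δ (k + 1) (d (k + 1 - 1 - k) x) = δ (k + 1) x := by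
        have h0 : k + 1 - 1 - k = 0 := by omega
        rw [h0, hd0]; rfl
      have hcongr : ∑ i ∈ range k, δ (i + 1) (d (k + 1 - 1 - i) x)
          = ∑ i ∈ range k, δ (i + 1) (d (k - i) x) := by
        refine sum_congr rfl fun i hi => ?_
        have h0 : k + 1 - 1 - i = k - i := by omega
        rw [h0]
      rw [hlast, hcongr, hx]
      abel
  intro n
  induction n using Nat.strong_induction_on with
  | _ n ih =>
    intro hn a b
    obtain ⟨m, rfl⟩ : ∃ m, n = m + 1 := ⟨n - 1, by omega⟩
    -- the main identity
    have MAIN : (m + 1) • d (m + 1) (a * b)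
        = ∑ i ∈ range m, δ (i + 1) (d (m - i) (a * b))
          + (a * δ (m + 1) b + δ (m + 1) a * b) := by
      -- expand the left side via the Hasse–Schmidt rule
      rw [hHS (m + 1) (by omega) a b, Finset.smul_sum]
      have hterm : ∀ j ∈ range (m + 2),
          (m + 1) • (d j a * d (m + 1 - j) b)
            = (j • d j a) * d (m + 1 - j) b + d j a * ((m + 1 - j) • d (m + 1 - j) b) := by
        intro j hj
        have hj' : j < m + 2 := mem_range.mp hj
        have h : m + 1 = j + (m + 1 - j) := by omega
        rw [smul_mul_assoc, mul_smul_comm, ← add_nsmul, ← h]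
      rw [sum_congr rfl hterm, sum_add_distrib]
      -- Part A (terms where the derivation hits `a`)
      have hA : ∑ j ∈ range (m + 2), (j • d j a) * d (m + 1 - j) b
          = ∑ i ∈ range m, ∑ k ∈ range (m - i + 1), δ (i + 1) (d k a) * d (m - i - k) b
            + δ (m + 1) a * b := by
        have e1 : ∀ j, (j • d j a) * d (m + 1 - j) b
            = ∑ p ∈ range j, δ (p + 1) (d (j - 1 - p) a) * d (m + 1 - j) b := by
          intro j
          rw [key j a, Finset.sum_mul]
        simp only [e1]
        rw [Finset.sum_range_succ']
        simp only [range_zero, sum_empty, add_zero]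
        have e2 : ∀ j ∈ range (m + 1),
            ∑ p ∈ range (j + 1), δ (p + 1) (d (j + 1 - 1 - p) a) * d (m + 1 - (j + 1)) b
              = ∑ p ∈ range (j + 1),
                  (fun p q => δ (p + 1) (d q a) * d (m - p - q) b) p (j - p) := by
          intro j hj
          have hj' : j < m + 1 := mem_range.mp hj
          refine sum_congr rfl fun p hp => ?_
          have hp' : p < j + 1 := mem_range.mp hp
          simp only []
          have h1 : j + 1 - 1 - p = j - p := by omega
          have h2 : m + 1 - (j + 1) = m - p - (j - p) := by omega
          rw [h1, h2]
        rw [sum_congr rfl e2, tri2 (fun p q => δ (p + 1) (d q a) * d (m - p - q) b) (m + 1),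
          sum_range_succ]
        have hl : ∑ q ∈ range (m + 1 - m),
            (fun p q => δ (p + 1) (d q a) * d (m - p - q) b) m q = δ (m + 1) a * b := by
          have h : m + 1 - m = 1 := by omega
          rw [h]
          simp only [range_one, sum_singleton, Nat.sub_self, Nat.sub_zero, hd0]
          rfl
        rw [hl]
        congr 1
        refine sum_congr rfl fun i hi => ?_
        have hi' : i < m := mem_range.mp hi
        have h : m + 1 - i = m - i + 1 := by omega
        rw [h]
      -- Part B (terms where the derivation hits `b`)
      have hB : ∑ j ∈ range (m + 2), d j a * ((m + 1 - j) • d (m + 1 - j) b)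
          = ∑ i ∈ range m, ∑ k ∈ range (m - i + 1), d k a * δ (i + 1) (d (m - i - k) b)
            + a * δ (m + 1) b := by
        have e1 : ∀ j, d j a * ((m + 1 - j) • d (m + 1 - j) b)
            = ∑ p ∈ range (m + 1 - j), d j a * δ (p + 1) (d (m + 1 - j - 1 - p) b) := by
          intro j
          rw [key (m + 1 - j) b, Finset.mul_sum]
        simp only [e1]
        rw [sum_range_succ]
        simp only [Nat.sub_self, range_zero, sum_empty, add_zero]
        have e2 : ∀ j ∈ range (m + 1),
            ∑ p ∈ range (m + 1 - j), d j a * δ (p + 1) (d (m + 1 - j - 1 - p) b)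
              = ∑ p ∈ range (m + 1 - j),
                  (fun j p => d j a * δ (p + 1) (d (m - j - p) b)) j p := by
          intro j hj
          have hj' : j < m + 1 := mem_range.mp hj
          refine sum_congr rfl fun p hp => ?_
          have hp' : p < m + 1 - j := mem_range.mp hp
          simp only []
          have h1 : m + 1 - j - 1 - p = m - j - p := by omega
          rw [h1]
        rw [sum_congr rfl e2,
          tri_swap (fun j p => d j a * δ (p + 1) (d (m - j - p) b)) (m + 1),
          sum_range_succ]
        have hl : ∑ j ∈ range (m + 1 - m),
            (fun j p => d j a * δ (p + 1) (d (m - j - p) b)) j m = a * δ (m + 1) b := by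
          have h : m + 1 - m = 1 := by omega
          rw [h]
          simp only [range_one, sum_singleton]
          have h0 : m - 0 - m = 0 := by omega
          rw [h0, hd0]
          rfl
        rw [hl]
        congr 1
        refine sum_congr rfl fun i hi => ?_
        have hi' : i < m := mem_range.mp hi
        have h : m + 1 - i = m - i + 1 := by omega
        rw [h]
        refine sum_congr rfl fun k hk => ?_
        have hk' : k < m - i + 1 := mem_range.mp hk
        have h1 : m - k - i = m - i - k := by omega
        rw [h1]
      rw [hA, hB]
      -- expand the right-hand side using the induction hypothesis
      have hR : ∀ i ∈ range m, δ (i + 1) (d (m - i) (a * b))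
          = ∑ k ∈ range (m - i + 1),
              (d k a * δ (i + 1) (d (m - i - k) b) + δ (i + 1) (d k a) * d (m - i - k) b) := by
        intro i hi
        have hi' : i < m := mem_range.mp hi
        rw [hHS (m - i) (by omega) a b, map_sum]
        have hrange : m - i + 1 = m - i + 1 := rfl
        refine sum_congr rfl fun k hk => ?_
        exact ih (i + 1) (by omega) (by omega) (d k a) (d (m - i - k) b)
      rw [sum_congr rfl hR]
      simp only [sum_add_distrib]
      abel
    -- conclude by cancellation, using `key` at `n = m + 1`
    have hsplit : (m + 1) • d (m + 1) (a * b)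
        = ∑ i ∈ range m, δ (i + 1) (d (m - i) (a * b)) + δ (m + 1) (a * b) := by
      rw [key (m + 1) (a * b), sum_range_succ]
      have hlast : δ (m + 1) (d (m + 1 - 1 - m) (a * b)) = δ (m + 1) (a * b) := by
        have h0 : m + 1 - 1 - m = 0 := by omega
        rw [h0, hd0]; rfl
      rw [hlast]
      refine congrArg (· + δ (m + 1) (a * b)) ?_
      refine sum_congr rfl fun i hi => ?_
      have hi' : i < m := mem_range.mp hi
      have h0 : m + 1 - 1 - i = m - i := by omega
      rw [h0]
    exact add_left_cancel (hsplit.symm.trans MAIN)
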